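/- For each even integer t ≥ 6 and each positive integer b, if the cyclotomic polynomial Φ_b(x) divides Q_t(x), then p² does not divide b for any prime p ≥ 11, and moreover 7³ ∤ b, 5³ ∤ b, 3⁴ ∤ b, and 2² ∤ b. -/

import Mathlib

open Polynomial Finset

/-- `Q_t(x) = 2x^{2t+1} − 2x^{2t−1} + 2x^{2t−2} + x^{t+3} − x^{t+2} + x^{t−1} − x^{t−2}
− 2x^3 + 2x^2 − 2`. -/
noncomputable def Qpoly (t : ℕ) : Polynomial ℚ :=
  C 2 * X ^ (2 * t + 1) - C 2 * X ^ (2 * t - 1) + C 2 * X ^ (2 * t - 2) + X ^ (t + 3)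
    - X ^ (t + 2) + X ^ (t - 1) - X ^ (t - 2) - C 2 * X ^ 3 + C 2 * X ^ 2 - C 2

lemma ratint {q : ℚ} (h : IsIntegral ℤ ((q : ℂ))) : ∃ z : ℤ, (z : ℚ) = q := by
  have h2 : IsIntegral ℤ q := by
    have : (algebraMap ℚ ℂ) q = (q : ℂ) := by
      exact eq_ratCast (algebraMap ℚ ℂ) q
    rw [← this] at h
    exact (isIntegral_algebraMap_iff (algebraMap ℚ ℂ).injective).mp h
  exact IsIntegrallyClosed.isIntegral_iff.mp h2

lemma cop {b M : ℕ} (hrad : ∀ q : ℕ, q.Prime → q ∣ b → q ∣ b / M)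
    (s : ℕ) : Nat.Coprime (1 + s * (b / M)) b := by
  by_contra hc
  obtain ⟨q, hq, hq1, hq2⟩ := Nat.Prime.not_coprime_iff_dvd.mp hc
  have h3 : q ∣ b / M := hrad q hq hq2
  have : q ∣ 1 := (Nat.dvd_add_right (Dvd.dvd.mul_left h3 s)).mp (by rwa [Nat.add_comm] at hq1)
  exact hq.one_lt.ne' (Nat.dvd_one.mp this)

lemma rootint {b : ℕ} {z : ℂ} (hb : 0 < b) (hz : z ^ b = 1) : IsIntegral ℤ z := by
  refine ⟨X ^ b - C 1, monic_X_pow_sub_C 1 hb.ne', ?_⟩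
  simp [hz]

lemma geomzero {M : ℕ} {x : ℂ} (hx : x ^ M = 1) (h1 : x ≠ 1) :
    ∑ s ∈ range M, x ^ s = 0 := by
  have := geom_sum_mul x M
  rw [hx, sub_self] at this
  exact (mul_eq_zero.mp this).resolve_right (sub_ne_zero.mpr h1)

lemma Qaeval (u : ℕ) (z : ℂ) : (aeval z) (Qpoly (u + 6)) =
    2 * z ^ (2*u+13) - 2 * z ^ (2*u+11) + 2 * z ^ (2*u+10) + z ^ (u+9) - z ^ (u+8)
      + z ^ (u+5) - z ^ (u+4) - 2 * z ^ 3 + 2 * z ^ 2 - 2 := by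
  simp only [Qpoly, show 2*(u+6)+1 = 2*u+13 by omega, show 2*(u+6)-1 = 2*u+11 by omega,
    show 2*(u+6)-2 = 2*u+10 by omega, show u+6+3 = u+9 by omega, show u+6+2 = u+8 by omega,
    show u+6-1 = u+5 by omega, show u+6-2 = u+4 by omega]
  simp [map_sub, map_add, map_mul, map_pow]


lemma powshuffle (x y : ℂ) (c s e : ℕ) :
    x ^ (c * s) * (y * x ^ s) ^ e = y ^ e * (x ^ (c + e)) ^ s := by
  rw [mul_pow, ← pow_mul x s e, ← pow_mul x (c + e) s,
    show (c + e) * s = c * s + s * e by ring, pow_add]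
  ring

lemma engine {b M u : ℕ} {ζ : ℂ} (hb : 0 < b) (hζ : IsPrimitiveRoot ζ b)
    (hM5 : 5 < M) (hModd : M % 2 = 1) (hMb : M ∣ b)
    (hcop : ∀ s : ℕ, Nat.Coprime (1 + s * (b / M)) b)
    (hQ : ∀ k : ℕ, Nat.Coprime k b → (aeval (ζ ^ k)) (Qpoly (u + 6)) = 0) : False := by
  have hM0 : 0 < M := by omega
  set ν : ℂ := ζ ^ (b / M) with hνdef
  have hbM : b = (b / M) * M := (Nat.div_mul_cancel hMb).symm
  have hν : IsPrimitiveRoot ν M := hζ.pow hb hbM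
  have hνM : ν ^ M = 1 := hν.pow_eq_one
  have hζb : ζ ^ b = 1 := hζ.pow_eq_one
  have hζint : IsIntegral ℤ ζ := rootint hb hζb
  have hνint : IsIntegral ℤ ν := hζint.pow _
  set c : ℕ := (u + 9) * (M - 1) with hcdef
  have hc9 : c + (u + 9) = (u + 9) * M := by
    rw [hcdef, ← Nat.mul_succ]; congr 1; omega
  have hQs : ∀ s : ℕ, (aeval (ζ * ν ^ s)) (Qpoly (u + 6)) = 0 := by
    intro s
    have h := hQ (1 + s * (b / M)) (hcop s)
    rwa [pow_add, pow_one, mul_comm s (b / M), pow_mul] at h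
  set F : ℕ → ℂ := fun e => ∑ s ∈ range M, ν ^ (c * s) * (ζ * ν ^ s) ^ e with hFdef
  have hFval : ∀ e, F e = ζ ^ e * ∑ s ∈ range M, (ν ^ (c + e)) ^ s := by
    intro e
    rw [hFdef, Finset.mul_sum]
    exact Finset.sum_congr rfl fun s _ => powshuffle ν ζ c s e
  have hFint : ∀ e, IsIntegral ℤ (F e) := by
    intro e
    rw [hFval]
    refine (hζint.pow e).mul ?_
    have : (∑ s ∈ range M, (ν ^ (c + e)) ^ s) ∈ integralClosure ℤ ℂ :=
      Subalgebra.sum_mem _ fun s _ => ((hνint.pow _).pow _ : IsIntegral ℤ _)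
    exact this
  have hF9 : F (u + 9) = (M : ℂ) * ζ ^ (u + 9) := by
    rw [hFval, hc9, mul_comm (u + 9) M, pow_mul, hνM, one_pow]
    simp [mul_comm]
  have hFz : ∀ e d : ℕ, c + e + d = (u + 9) * M → 0 < d → d ≤ 5 → F e = 0 := by
    intro e d hed hd0 hd5
    rw [hFval]
    have hne : ν ^ (c + e) ≠ 1 := by
      intro h1
      have hdvd1 : M ∣ c + e := (hν.pow_eq_one_iff_dvd _).mp h1
      have hdvd2 : M ∣ c + e + d := ⟨u + 9, by rw [hed]; ring⟩
      have hMd : M ∣ d := (Nat.dvd_add_right hdvd1).mp hdvd2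
      have := Nat.le_of_dvd hd0 hMd
      omega
    have hpow : (ν ^ (c + e)) ^ M = 1 := by
      rw [← pow_mul ν (c + e) M, mul_comm (c + e) M, pow_mul, hνM, one_pow]
    rw [geomzero hpow hne, mul_zero]
  have h5 : F (u + 8) = 0 := hFz (u + 8) 1 (by omega) (by omega) (by omega)
  have h6 : F (u + 5) = 0 := hFz (u + 5) 4 (by omega) (by omega) (by omega)
  have h7 : F (u + 4) = 0 := hFz (u + 4) 5 (by omega) (by omega) (by omega)
  have hsum : 2 * F (2*u+13) - 2 * F (2*u+11) + 2 * F (2*u+10) + F (u+9) - F (u+8)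
      + F (u+5) - F (u+4) - 2 * F 3 + 2 * F 2 - 2 * F 0 = 0 := by
    have h0 : ∑ s ∈ range M, ν ^ (c * s) * (aeval (ζ * ν ^ s)) (Qpoly (u + 6)) = 0 := by
      simp [hQs]
    rw [← h0]
    have h1 : ∀ s ∈ range M, ν ^ (c * s) * (aeval (ζ * ν ^ s)) (Qpoly (u + 6)) =
        2 * (ν ^ (c*s) * (ζ * ν ^ s) ^ (2*u+13)) - 2 * (ν ^ (c*s) * (ζ * ν ^ s) ^ (2*u+11))
        + 2 * (ν ^ (c*s) * (ζ * ν ^ s) ^ (2*u+10)) + ν ^ (c*s) * (ζ * ν ^ s) ^ (u+9)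
        - ν ^ (c*s) * (ζ * ν ^ s) ^ (u+8) + ν ^ (c*s) * (ζ * ν ^ s) ^ (u+5)
        - ν ^ (c*s) * (ζ * ν ^ s) ^ (u+4) - 2 * (ν ^ (c*s) * (ζ * ν ^ s) ^ 3)
        + 2 * (ν ^ (c*s) * (ζ * ν ^ s) ^ 2) - 2 * (ν ^ (c*s) * (ζ * ν ^ s) ^ 0) := by
      intro s _
      rw [Qaeval]; ring
    rw [Finset.sum_congr rfl h1]
    simp only [Finset.sum_sub_distrib, Finset.sum_add_distrib, ← Finset.mul_sum]
    rfl
  rw [hF9, h5, h6, h7] at hsum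
  set Γ : ℂ := F (2*u+13) - F (2*u+11) + F (2*u+10) - F 3 + F 2 - F 0 with hΓdef
  have key : (M : ℂ) * ζ ^ (u + 9) = (-2) * Γ := by
    rw [hΓdef]; linear_combination hsum
  have hΓint : IsIntegral ℤ Γ := by
    rw [hΓdef]
    exact (((((hFint _).sub (hFint _)).add (hFint _)).sub (hFint _)).add (hFint _)).sub (hFint _)
  have hMb' : ((M : ℂ)) ^ b = (-2 : ℂ) ^ b * Γ ^ b := by
    have h1 : ((M : ℂ) * ζ ^ (u + 9)) ^ b = (M : ℂ) ^ b := by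
      rw [mul_pow, ← pow_mul, mul_comm (u + 9) b, pow_mul, hζb, one_pow, mul_one]
    rw [← h1, key, mul_pow]
  set q : ℚ := (-(M : ℚ) / 2) ^ b with hqdef
  have hq : (q : ℂ) = Γ ^ b := by
    have h2 : (-2 : ℂ) ^ b ≠ 0 := pow_ne_zero _ (by norm_num)
    apply mul_left_cancel₀ h2
    rw [← hMb']
    rw [hqdef]
    push_cast
    rw [← mul_pow]
    ring_nf
  have hint : IsIntegral ℤ ((q : ℚ) : ℂ) := by rw [hq]; exact hΓint.pow b
  obtain ⟨z, hz⟩ := ratint hint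
  have hz2 : (z : ℚ) * 2 ^ b = (-(M : ℚ)) ^ b := by
    rw [hz, hqdef, div_pow]
    field_simp
  have hz3 : (z : ℤ) * 2 ^ b = (-(M : ℤ)) ^ b := by exact_mod_cast hz2
  have hdvd2 : (2 : ℤ) ∣ (-(M : ℤ)) ^ b := by
    rw [← hz3]
    exact Dvd.dvd.mul_left (dvd_pow_self 2 hb.ne') z
  have hdvdM : (2 : ℤ) ∣ (M : ℤ) := by
    have := Int.Prime.dvd_pow' (p := 2) (by norm_num) hdvd2
    rwa [Int.dvd_neg] at this
  have : (2 : ℕ) ∣ M := by exact_mod_cast hdvdM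
  omega

lemma chain {u0 γ0 : ℂ} (hu0 : IsIntegral ℤ u0) (h0 : IsIntegral ℤ γ0)
    (heq : 1 + u0 = 2 * γ0) :
    ∀ k : ℕ, ∃ γ : ℂ, IsIntegral ℤ γ ∧ 1 + u0 ^ (2 ^ k) = 2 * γ := by
  intro k
  induction k with
  | zero => exact ⟨γ0, h0, by rw [pow_zero, pow_one]; exact heq⟩
  | succ k ih =>
    obtain ⟨γ, hγ, he⟩ := ih
    refine ⟨γ ^ 2 + γ ^ 2 - u0 ^ (2 ^ k), ((hγ.pow 2).add (hγ.pow 2)).sub (hu0.pow _), ?_⟩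
    rw [pow_succ, pow_mul]
    linear_combination (1 + u0 ^ (2 ^ k) + 2 * γ) * he


lemma smallcase {b : ℕ} {ζ : ℂ} (hζ : IsPrimitiveRoot ζ b) (hb : 0 < b) {P : ℚ[X]}
    (hP : (aeval ζ) P = 0) (hdeg : P.natDegree < b.totient) (hPne : P ≠ 0) : False := by
  have hmin : cyclotomic b ℚ = minpoly ℚ ζ := cyclotomic_eq_minpoly_rat hζ hb
  have h2 := Polynomial.natDegree_le_of_dvd (hmin ▸ minpoly.dvd ℚ ζ hP) hPne
  rw [natDegree_cyclotomic] at h2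
  omega

lemma sqrt1 {ζ : ℂ} {b l : ℕ} (hζ : IsPrimitiveRoot ζ b) (h2 : ζ ^ (2 * l) = 1)
    (hl : 0 < l) (hlb : l < b) : ζ ^ l = -1 := by
  have hsq : (ζ ^ l) ^ 2 = 1 := by rw [← pow_mul, mul_comm]; exact h2
  rcases mul_eq_zero.mp (show (ζ ^ l - 1) * (ζ ^ l + 1) = 0 by linear_combination hsq) with h | h
  · have h1 : ζ ^ l = 1 := by linear_combination h
    exact absurd h1 (hζ.pow_ne_one_of_pos_of_lt hl.ne' hlb)
  · linear_combination h

lemma case4 {u : ℕ} {ζ : ℂ} (hζ : IsPrimitiveRoot ζ 4) (hu : u % 2 = 0)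
    (hQ : (aeval ζ) (Qpoly (u + 6)) = 0) : False := by
  have hζ4 : ζ ^ 4 = 1 := hζ.pow_eq_one
  have hz2 : ζ ^ 2 = -1 := sqrt1 hζ (by rw [show 2*2 = 4 by norm_num]; exact hζ4)
    (by norm_num) (by norm_num)
  have powred : ∀ m r : ℕ, ζ ^ (4 * m + r) = ζ ^ r := by
    intro m r; rw [pow_add, pow_mul, hζ4, one_pow, one_mul]
  rw [Qaeval] at hQ
  have hne1 : ζ ≠ 1 := hζ.ne_one (by norm_num)
  obtain ⟨w, rfl⟩ : ∃ w, u = 2 * w := ⟨u / 2, by omega⟩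
  rcases Nat.even_or_odd w with ⟨v, rfl⟩ | ⟨v, rfl⟩
  · rw [show 2*(2*(v+v))+13 = 4*(v+v+3)+1 by ring, show 2*(2*(v+v))+11 = 4*(v+v+2)+3 by ring,
      show 2*(2*(v+v))+10 = 4*(v+v+2)+2 by ring, show 2*(v+v)+9 = 4*v+9 by ring,
      show 4*v+9 = 4*(v+2)+1 by ring, show 2*(v+v)+8 = 4*(v+2)+0 by ring,
      show 2*(v+v)+5 = 4*(v+1)+1 by ring, show 2*(v+v)+4 = 4*(v+1)+0 by ring,
      powred, powred, powred, powred, powred, powred, powred] at hQ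
    exact hne1 (by linear_combination hQ/8 + ((4*ζ-4)/8)*hz2)
  · rw [show 2*(2*(2*v+1))+13 = 4*(2*v+4)+1 by ring, show 2*(2*(2*v+1))+11 = 4*(2*v+3)+3 by ring,
      show 2*(2*(2*v+1))+10 = 4*(2*v+3)+2 by ring, show 2*(2*v+1)+9 = 4*(v+2)+3 by ring,
      show 2*(2*v+1)+8 = 4*(v+2)+2 by ring, show 2*(2*v+1)+5 = 4*(v+1)+3 by ring,
      show 2*(2*v+1)+4 = 4*(v+1)+2 by ring,
      powred, powred, powred, powred, powred, powred, powred] at hQ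
    exact hne1 (by linear_combination hQ/4 + ((2*ζ-2)/4)*hz2)

lemma case8 {u : ℕ} {ζ : ℂ} (hζ : IsPrimitiveRoot ζ 8) (hu : u % 2 = 0)
    (hQ : (aeval ζ) (Qpoly (u + 6)) = 0) : False := by
  have hζ8 : ζ ^ 8 = 1 := hζ.pow_eq_one
  have hz4 : ζ ^ 4 = -1 := sqrt1 hζ (by rw [show 2*4 = 8 by norm_num]; exact hζ8)
    (by norm_num) (by norm_num)
  have powred : ∀ m r : ℕ, ζ ^ (8 * m + r) = ζ ^ r := by
    intro m r; rw [pow_add, pow_mul, hζ8, one_pow, one_mul]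
  rw [Qaeval] at hQ
  have hne1 : ζ ≠ 1 := hζ.ne_one (by norm_num)
  have e9 : ζ ^ (u + 9) = -ζ ^ (u + 5) := by
    rw [show u + 9 = u + 5 + 4 by ring, pow_add, hz4, mul_neg_one]
  have e8 : ζ ^ (u + 8) = -ζ ^ (u + 4) := by
    rw [show u + 8 = u + 4 + 4 by ring, pow_add, hz4, mul_neg_one]
  obtain ⟨w, rfl⟩ : ∃ w, u = 2 * w := ⟨u / 2, by omega⟩
  rcases Nat.even_or_odd w with ⟨v, rfl⟩ | ⟨v, rfl⟩
  · -- w even : get 4ζ³ - 4ζ² + 2ζ + 2 = 0, contradict via minpoly degree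
    rw [show 2*(2*(v+v))+13 = 8*v+13 by ring, show 8*v+13 = 8*(v+1)+5 by ring,
      show 2*(2*(v+v))+11 = 8*(v+1)+3 by ring, show 2*(2*(v+v))+10 = 8*(v+1)+2 by ring,
      powred, powred, powred] at hQ
    have hPz : (4:ℂ) * ζ^3 - 4 * ζ^2 + 2 * ζ + 2 = 0 := by
      linear_combination -hQ + 2*ζ*hz4 + e9 - e8
    set P : ℚ[X] := C 4 * X^3 - C 4 * X^2 + C 2 * X + C 2 with hPdef
    have hP0 : (aeval ζ) P = 0 := by
      rw [hPdef]
      simp only [map_add, map_sub, map_mul, map_pow, aeval_C, aeval_X, map_ofNat]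
      linear_combination hPz
    refine smallcase hζ (by norm_num) hP0 ?_ ?_
    · have : P.natDegree = 3 := by rw [hPdef]; compute_degree!
      rw [this]
      norm_num [Nat.totient]
      decide
    · intro h
      have := congrArg (fun p => Polynomial.coeff p 0) h
      simp [hPdef] at this
  · rw [show 2*(2*(2*v+1))+13 = 8*(v+2)+1 by ring, show 2*(2*(2*v+1))+11 = 8*(v+1)+7 by ring,
      show 2*(2*(2*v+1))+10 = 8*(v+1)+6 by ring,
      powred, powred, powred] at hQ
    exact hne1 (by linear_combination hQ/2 + (ζ^3-ζ^2)*hz4 - e9/2 + e8/2)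

lemma radpow {p M b : ℕ} (hp : p.Prime) (hM : ∃ j, M = p ^ j) (hd : M * p ∣ b) :
    ∀ q : ℕ, q.Prime → q ∣ b → q ∣ b / M := by
  obtain ⟨j, rfl⟩ := hM
  obtain ⟨m, hm⟩ : p ^ j ∣ b := (dvd_mul_right _ p).trans hd
  have hppos : 0 < p ^ j := pow_pos hp.pos j
  have hbM : b / p ^ j = m := by rw [hm, Nat.mul_div_cancel_left _ hppos]
  have hpm : p ∣ m := by
    have h2 : p ^ j * p ∣ p ^ j * m := by rwa [← hm]
    exact (Nat.mul_dvd_mul_iff_left hppos).mp h2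
  intro q hq hqb
  rw [hbM]
  rcases (Nat.Prime.dvd_mul hq).mp (hm ▸ hqb) with h | h
  · have : q = p := (Nat.prime_dvd_prime_iff_eq hq hp).mp (hq.dvd_of_dvd_pow h)
    exact this ▸ hpm
  · exact h

lemma p2 {b u : ℕ} {ζ : ℂ} (hb : 0 < b) (hζ : IsPrimitiveRoot ζ b) (h4 : 4 ∣ b)
    (hu : u % 2 = 0)
    (hQ : ∀ k : ℕ, Nat.Coprime k b → (aeval (ζ ^ k)) (Qpoly (u + 6)) = 0) : False := by
  have hb4 : 4 ≤ b := Nat.le_of_dvd hb h4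
  have hζb : ζ ^ b = 1 := hζ.pow_eq_one
  have hζint : IsIntegral ℤ ζ := rootint hb hζb
  have hrad : ∀ q : ℕ, q.Prime → q ∣ b → q ∣ b / 2 :=
    radpow Nat.prime_two ⟨1, (pow_one 2).symm⟩ (by rw [show 2*2 = 4 by norm_num]; exact h4)
  have hcop := cop hrad
  have hQ1 : (aeval ζ) (Qpoly (u + 6)) = 0 := by
    have h := hQ 1 (Nat.coprime_one_left b); rwa [pow_one] at h
  have h2db : 2 ∣ b := dvd_trans (by norm_num) h4
  have hhalf : ζ ^ (b / 2) = -1 :=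
    sqrt1 hζ (by rw [show 2 * (b/2) = b by omega]; exact hζb) (by omega) (by omega)
  have hQneg : (aeval (-ζ)) (Qpoly (u + 6)) = 0 := by
    have h := hQ (1 + 1 * (b / 2)) (hcop 1)
    rwa [one_mul, pow_add, pow_one, hhalf, mul_neg_one] at h
  have hQorig := hQ1
  rw [Qaeval] at hQ1 hQneg
  -- odd-class equation
  have hodd : ζ^(u+9) + ζ^(u+5) = 2 * (ζ^(2*u+11) + ζ^3 - ζ^(2*u+13)) := by
    have o1 : Odd (2*u+13) := ⟨u+6, by ring⟩
    have o2 : Odd (2*u+11) := ⟨u+5, by ring⟩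
    have e3 : Even (2*u+10) := ⟨u+5, by ring⟩
    have o4 : Odd (u+9) := by rw [Nat.odd_iff]; omega
    have e5 : Even (u+8) := by rw [Nat.even_iff]; omega
    have o6 : Odd (u+5) := by rw [Nat.odd_iff]; omega
    have e7 : Even (u+4) := by rw [Nat.even_iff]; omega
    rw [o1.neg_pow, o2.neg_pow, e3.neg_pow, o4.neg_pow, e5.neg_pow, o6.neg_pow, e7.neg_pow,
      show ((-ζ)^3 : ℂ) = -ζ^3 by ring, show ((-ζ)^2 : ℂ) = ζ^2 by ring] at hQneg
    linear_combination (hQ1 - hQneg)/2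
  set γ : ℂ := ζ^(2*u+11) + ζ^3 - ζ^(2*u+13) with hγdef
  have hγint : IsIntegral ℤ γ := ((hζint.pow _).add (hζint.pow _)).sub (hζint.pow _)
  -- 1 + ζ^4 = 2 * (γ * χ)
  set χ : ℂ := ζ ^ ((b-1)*(u+5)) with hχdef
  have hχ : ζ^(u+5) * χ = 1 := by
    rw [hχdef, ← pow_add, Nat.sub_one_mul,
      Nat.add_sub_cancel' (Nat.le_mul_of_pos_left _ hb), pow_mul, hζb, one_pow]
  have hfact : ζ^(u+9) = ζ^(u+5) * ζ^4 := by rw [← pow_add]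
  have heq2 : 1 + ζ^4 = 2 * (γ * χ) := by
    linear_combination χ*hodd - χ*hfact - (1+ζ^4)*hχ
  have hγχint : IsIntegral ℤ (γ * χ) := hγint.mul (hζint.pow _)
  have hu0int : IsIntegral ℤ (ζ^4) := hζint.pow 4
  have chainfun := chain hu0int hγχint heq2
  obtain ⟨n, hbn⟩ := h4
  have hn0 : n ≠ 0 := by omega
  have hu0prim : IsPrimitiveRoot (ζ^4) n := hζ.pow hb hbn
  obtain ⟨a, n', hoddn', hnfact⟩ := Nat.exists_eq_two_pow_mul_odd hn0
  have hn'1 : 1 ≤ n' := hoddn'.pos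
  set W : ℂ := (ζ^4)^(2^a) with hWdef
  have hWprim : IsPrimitiveRoot W n' := hu0prim.pow (by omega) hnfact
  have chainW : ∀ k : ℕ, ∃ γ' : ℂ, IsIntegral ℤ γ' ∧ 1 + W^(2^k) = 2*γ' := by
    intro k
    obtain ⟨γ', h1, h2⟩ := chainfun (a+k)
    exact ⟨γ', h1, by rwa [pow_add, pow_mul] at h2⟩
  rcases Nat.lt_or_ge n' 2 with hn'2 | hn'2
  · -- n' = 1, so b = 2^(a+2)
    have hn'eq : n' = 1 := by omega
    have hna : n = 2^a := by rw [hnfact, hn'eq, mul_one]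
    match a, hna with
    | 0, hna => exact case4 (by rwa [hbn, hna, pow_zero, mul_one] at hζ) hu hQorig
    | 1, hna => exact case8 (by rwa [hbn, hna, show 4*2^1 = 8 by norm_num] at hζ) hu hQorig
    | (a''+2), hna =>
      have hVprim : IsPrimitiveRoot ((ζ^4)^(2^a'')) 4 :=
        hu0prim.pow (by omega) (by rw [hna, pow_add]; norm_num)
      set V : ℂ := (ζ^4)^(2^a'') with hVdef
      have hV2 : V^2 = -1 :=
        sqrt1 hVprim (by rw [show 2*2 = 4 by norm_num]; exact hVprim.pow_eq_one)
          (by norm_num) (by norm_num)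
      obtain ⟨γ₂, hγ₂int, hch⟩ := chainfun a''
      rw [← hVdef] at hch
      have e1 : 4*γ₂^2 = 2*V := by linear_combination (-(1+V+2*γ₂))*hch + hV2
      have e2 : (16:ℂ)*γ₂^4 = -4 := by linear_combination (4*γ₂^2 + 2*V)*e1 + 4*hV2
      have hq4 : (((-1/4 : ℚ)) : ℂ) = γ₂^4 := by push_cast; linear_combination (-1/16)*e2
      obtain ⟨z, hz⟩ := ratint (hq4 ▸ hγ₂int.pow 4)
      have hz4 : (z:ℚ)*4 = -1 := by rw [hz]; norm_num
      have : (z*4 : ℤ) = -1 := by exact_mod_cast hz4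
      omega
  · -- n' odd, ≥ 3
    set d : ℕ := n'.totient with hddef
    have hd1 : 0 < d := Nat.totient_pos.mpr (by omega)
    have hcop2 : Nat.Coprime 2 n' := by
      rw [Nat.prime_two.coprime_iff_not_dvd]
      rw [Nat.odd_iff] at hoddn'
      omega
    have h2d : n' ∣ 2^d - 1 :=
      (Nat.modEq_iff_dvd' Nat.one_le_two_pow).mp (Nat.ModEq.pow_totient hcop2).symm
    have hWd : W^(2^d) = W := by
      have h1 : W^(2^d - 1) = 1 := (hWprim.pow_eq_one_iff_dvd _).mpr h2d
      calc W^(2^d) = W^(2^d - 1) * W := by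
            rw [← pow_succ]; congr 1; have := Nat.one_le_two_pow (n := d); omega
        _ = W := by rw [h1, one_mul]
    have hfne : ∀ k : ℕ, (1:ℂ) - W^(2^k) ≠ 0 := by
      intro k h
      have hW1 : W^(2^k) = 1 := by linear_combination -h
      have hdvd : n' ∣ 2^k := (hWprim.pow_eq_one_iff_dvd _).mp hW1
      have : n' = 1 := Nat.Coprime.eq_one_of_dvd ((hcop2.symm).pow_right k) hdvd
      omega
    have hD0 : (∏ k ∈ range d, ((1:ℂ) - W^(2^k))) ≠ 0 :=
      Finset.prod_ne_zero_iff.mpr (fun k _ => hfne k)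
    have hPD : (∏ k ∈ range d, ((1:ℂ) + W^(2^k))) * (∏ k ∈ range d, ((1:ℂ) - W^(2^k)))
        = ∏ k ∈ range d, ((1:ℂ) - W^(2^(k+1))) := by
      rw [← Finset.prod_mul_distrib]
      refine Finset.prod_congr rfl fun k _ => ?_
      rw [pow_succ, pow_mul]; ring
    have hshift : (∏ k ∈ range d, ((1:ℂ) - W^(2^(k+1)))) * ((1:ℂ) - W^(2^0))
        = (∏ k ∈ range d, ((1:ℂ) - W^(2^k))) * ((1:ℂ) - W^(2^d)) := by
      rw [← Finset.prod_range_succ' (fun k => (1:ℂ) - W^(2^k)) d, Finset.prod_range_succ]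
    have hW0 : ((1:ℂ) - W^(2^0)) ≠ 0 := hfne 0
    have hP1 : (∏ k ∈ range d, ((1:ℂ) + W^(2^k))) = 1 := by
      apply mul_right_cancel₀ hD0
      apply mul_right_cancel₀ hW0
      rw [hPD, hshift, hWd, one_mul]
      ring_nf
    choose g hgint hgeq using chainW
    have hprodg : (∏ k ∈ range d, ((1:ℂ) + W^(2^k))) = 2^d * ∏ k ∈ range d, g k := by
      rw [Finset.prod_congr rfl (fun k _ => hgeq k), Finset.prod_mul_distrib,
        Finset.prod_const, Finset.card_range]
    have hGint : IsIntegral ℤ (∏ k ∈ range d, g k) :=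
      show _ ∈ integralClosure ℤ ℂ from Subalgebra.prod_mem _ fun k _ => hgint k
    have h2G : (2:ℂ)^d * ∏ k ∈ range d, g k = 1 := by rw [← hprodg, hP1]
    have hqd : (((1/2^d : ℚ)) : ℂ) = ∏ k ∈ range d, g k := by
      have h2 : (2:ℂ)^d ≠ 0 := pow_ne_zero _ two_ne_zero
      push_cast
      rw [div_eq_iff h2]
      linear_combination -h2G
    obtain ⟨z, hz⟩ := ratint (hqd ▸ hGint)
    have hz2 : (z:ℚ) * 2^d = 1 := by rw [hz]; field_simp
    have hzz : (z : ℤ) * 2^d = 1 := by exact_mod_cast hz2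
    have h2dvd : (2:ℤ) ∣ 1 := by
      rw [← hzz, show d = (d-1)+1 by omega, pow_succ]
      exact ⟨z * 2^(d-1), by ring⟩
    norm_num at h2dvd

/-- If `Φ_b ∣ Q_t` for even `t ≥ 6` and `b ≥ 1`, then `p² ∤ b` for every prime `p ≥ 11`, and
`7³ ∤ b`, `5³ ∤ b`, `3⁴ ∤ b`, `2² ∤ b`. -/
theorem cyclotomic_dvd_Qpoly_constraints (t : ℕ) (ht : 6 ≤ t) (hte : Even t) (b : ℕ)
    (hb : 0 < b) (hdvd : cyclotomic b ℚ ∣ Qpoly t) :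
    (∀ p : ℕ, p.Prime → 11 ≤ p → ¬ p ^ 2 ∣ b) ∧
      ¬ 7 ^ 3 ∣ b ∧ ¬ 5 ^ 3 ∣ b ∧ ¬ 3 ^ 4 ∣ b ∧ ¬ 2 ^ 2 ∣ b := by
  obtain ⟨u, rfl⟩ : ∃ u, t = u + 6 := ⟨t - 6, by omega⟩
  have hu : u % 2 = 0 := by
    have h := Nat.even_iff.mp hte
    omega
  set ζ : ℂ := Complex.exp (2 * Real.pi * Complex.I / b) with hζdef
  have hζ : IsPrimitiveRoot ζ b := Complex.isPrimitiveRoot_exp b hb.ne'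
  have hQ : ∀ k : ℕ, Nat.Coprime k b → (aeval (ζ ^ k)) (Qpoly (u + 6)) = 0 := by
    intro k hk
    obtain ⟨R, hR⟩ := hdvd
    rw [hR, map_mul]
    have hprim := hζ.pow_of_coprime k hk
    have hc : (aeval (ζ ^ k)) (cyclotomic b ℚ) = 0 := by
      rw [aeval_def, ← eval_map, map_cyclotomic]
      exact hprim.isRoot_cyclotomic hb
    rw [hc, zero_mul]
  refine ⟨?_, ?_, ?_, ?_, ?_⟩
  · intro p hp hp11 hdd
    have hpodd : p % 2 = 1 := Nat.odd_iff.mp (hp.odd_of_ne_two (by omega))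
    exact engine (M := p) hb hζ (by omega) hpodd
      (dvd_trans (dvd_pow_self p two_ne_zero) hdd)
      (cop (radpow hp ⟨1, (pow_one p).symm⟩ (by rw [← pow_two]; exact hdd))) hQ
  · intro hdd
    exact engine (M := 7) hb hζ (by norm_num) (by norm_num)
      (dvd_trans (by norm_num) hdd)
      (cop (radpow (by norm_num : Nat.Prime 7) ⟨1, (pow_one 7).symm⟩
        (dvd_trans (show 7 * 7 ∣ 7 ^ 3 by norm_num) hdd))) hQ
  · intro hdd
    exact engine (M := 25) hb hζ (by norm_num) (by norm_num)
      (dvd_trans (by norm_num) hdd)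
      (cop (radpow (by norm_num : Nat.Prime 5) ⟨2, by norm_num⟩
        (dvd_trans (show 25 * 5 ∣ 5 ^ 3 by norm_num) hdd))) hQ
  · intro hdd
    exact engine (M := 27) hb hζ (by norm_num) (by norm_num)
      (dvd_trans (by norm_num) hdd)
      (cop (radpow (by norm_num : Nat.Prime 3) ⟨3, by norm_num⟩
        (dvd_trans (show 27 * 3 ∣ 3 ^ 4 by norm_num) hdd))) hQ
  · intro hdd
    exact p2 hb hζ (by rw [show (4:ℕ) = 2^2 by norm_num]; exact hdd) hu hQ
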